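/- arXiv:0902.3169 — 2 statements merged into one kernel-verified Lean document; each statement's English description precedes it below -/
import Mathlib

section
/- For a finite group H and primes p, q: the subgroup O^q(H) is p-hypoelementary if and only if the quotient H/O_p(H) is q-hyperelementary. -/
/-- `N` is `O^q(H)`: the smallest normal subgroup of `H` whose quotient is a `q`-group. -/
def IsOUpper (q : ℕ) {H : Type*} [Group H] (N : Subgroup H) : Prop :=
  ∃ hN : N.Normal,
    (letI := hN; IsPGroup q (H ⧸ N)) ∧
      ∀ M : Subgroup H, ∀ hM : M.Normal, (letI := hM; IsPGroup q (H ⧸ M)) → N ≤ M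

/-- `H` is `q`-hyperelementary: `O^q(H)` is cyclic. -/
def IsQHyperelementary (q : ℕ) (H : Type*) [Group H] : Prop :=
  ∃ N : Subgroup H, IsOUpper q N ∧ IsCyclic N

/-- `N` is `O_r(H)`: the largest normal `r`-subgroup of `H`. -/
def IsOLower (r : ℕ) {H : Type*} [Group H] (N : Subgroup H) : Prop :=
  N.Normal ∧ IsPGroup r N ∧ ∀ M : Subgroup H, M.Normal → IsPGroup r M → M ≤ N

/-- `H` is `r`-hypoelementary: `H / O_r(H)` is cyclic. -/
def IsRHypoelementary (r : ℕ) (H : Type*) [Group H] : Prop :=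
  ∃ N : Subgroup H, ∃ hN : IsOLower r N, (letI := hN.1; IsCyclic (H ⧸ N))

open Pointwise

lemma IsOLower.unique {r : ℕ} {G : Type*} [Group G] {C D : Subgroup G}
    (hC : IsOLower r C) (hD : IsOLower r D) : C = D :=
  le_antisymm (hD.2.2 C hC.1 hC.2.1) (hC.2.2 D hD.1 hD.2.1)

lemma IsOUpper.unique {q : ℕ} {G : Type*} [Group G] {C D : Subgroup G}
    (hC : IsOUpper q C) (hD : IsOUpper q D) : C = D := by
  obtain ⟨h1, h2, h3⟩ := hC
  obtain ⟨k1, k2, k3⟩ := hD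
  exact le_antisymm (h3 D k1 k2) (k3 C h1 h2)

/-- Existence of the `p`-core in a finite group. -/
lemma exists_isOLower (p : ℕ) (hp : p.Prime) (G : Type*) [Group G] [Finite G] :
    ∃ C : Subgroup G, IsOLower p C := by
  haveI : Fact p.Prime := ⟨hp⟩
  refine ⟨⨅ S : Sylow p G, ↑S, ?_, ?_, ?_⟩
  · constructor
    intro n hn g
    rw [Subgroup.mem_iInf] at hn ⊢
    intro S
    have h := hn (g⁻¹ • S)
    rw [Sylow.coe_subgroup_smul, Subgroup.mem_pointwise_smul_iff_inv_smul_mem] at h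
    simpa [MulAut.smul_def, mul_assoc] using h
  · exact (Classical.arbitrary (Sylow p G)).2.to_le (iInf_le _ _)
  · intro M hM hMp
    obtain ⟨S₀, hS₀⟩ := hMp.exists_le_sylow
    refine le_iInf fun S => ?_
    obtain ⟨g, hg⟩ := MulAction.exists_smul_eq G S₀ S
    haveI := hM
    calc M = MulAut.conj g • M := (Subgroup.Normal.conj_smul_eq_self g M).symm
    _ ≤ MulAut.conj g • (S₀ : Subgroup G) := by
        exact Subgroup.pointwise_smul_le_pointwise_smul_iff.mpr hS₀
    _ = ((g • S₀ : Sylow p G) : Subgroup G) := rfl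
    _ = S := by rw [hg]

/-- If `N` is normal in `H` and `C` is the `p`-core of `N`, then the image of `C` in `H`
is normal in `H`. -/
lemma olower_map_normal {p : ℕ} {H : Type*} [Group H] {N : Subgroup H} (hNn : N.Normal)
    {C : Subgroup N} (hC : IsOLower p C) : (C.map N.subtype).Normal := by
  set Q := C.map N.subtype with hQdef
  have hQle : Q ≤ N := by
    rintro x ⟨c, _, rfl⟩; exact c.2
  have key : ∀ g : H, MulAut.conj g • Q ≤ Q := by
    intro g
    set Q' := MulAut.conj g • Q with hQ'def
    have hQ'le : Q' ≤ N := by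
      calc Q' ≤ MulAut.conj g • N := Subgroup.pointwise_smul_le_pointwise_smul_iff.mpr hQle
      _ = N := Subgroup.Normal.conj_smul_eq_self (h := hNn) g N
    have hQ'p : IsPGroup p Q' := by
      have hQp : IsPGroup p Q := hC.2.1.map N.subtype
      rw [hQ'def, Subgroup.pointwise_smul_def]
      exact hQp.map _
    -- Q is invariant under conjugation by elements of N
    have hQN : ∀ m : H, m ∈ N → ∀ x ∈ Q, m * x * m⁻¹ ∈ Q := by
      rintro m hm x ⟨c, hc, rfl⟩
      have := hC.1.conj_mem c hc ⟨m, hm⟩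
      exact ⟨_, this, rfl⟩
    -- Q'.subgroupOf N is a normal p-subgroup of N
    have hsubn : (Q'.subgroupOf N).Normal := by
      constructor
      intro x hx n
      simp only [Subgroup.mem_subgroupOf] at hx ⊢
      rw [Subgroup.mem_pointwise_smul_iff_inv_smul_mem]
      have hn' : (g⁻¹ * (n : H) * g) ∈ N := by
        have := hNn.conj_mem (n : H) n.2 g⁻¹
        simpa [mul_assoc] using this
      have hx' : g⁻¹ * (x : H) * g ∈ Q := by
        have h2 := Subgroup.mem_pointwise_smul_iff_inv_smul_mem.mp hx
        simpa [MulAut.smul_def, ← map_inv, MulAut.conj_apply, mul_assoc] using h2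
      have : (g⁻¹ * (n : H) * g) * (g⁻¹ * (x : H) * g) * (g⁻¹ * (n : H) * g)⁻¹ ∈ Q :=
        hQN _ hn' _ hx'
      simpa [MulAut.smul_def, mul_assoc] using this
    have hsubp : IsPGroup p (Q'.subgroupOf N) :=
      hQ'p.comap_of_injective N.subtype Subtype.coe_injective
    have hle : Q'.subgroupOf N ≤ C := hC.2.2 _ hsubn hsubp
    intro x hx
    have hxN : x ∈ N := hQ'le hx
    have : (⟨x, hxN⟩ : N) ∈ Q'.subgroupOf N := hx
    exact ⟨⟨x, hxN⟩, hle this, rfl⟩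
  apply Subgroup.Normal.of_conjugate_fixed
  intro g
  refine le_antisymm (key g) ?_
  have := key g⁻¹
  calc Q = MulAut.conj g • MulAut.conj g⁻¹ • Q := by
        rw [← mul_smul, ← map_mul, mul_inv_cancel]; simp
  _ ≤ MulAut.conj g • Q := Subgroup.pointwise_smul_le_pointwise_smul_iff.mpr (key g⁻¹)

/-- If `P = O_p(H)` and `N` is normal in `H` then `P ∩ N = O_p(N)`. -/
lemma isOLower_subgroupOf {p : ℕ} (hp : p.Prime) {H : Type*} [Group H] [Finite H]
    {N P : Subgroup H} (hNn : N.Normal) (hP : IsOLower p P) :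
    IsOLower p (P.subgroupOf N) := by
  refine ⟨hP.1.subgroupOf N, hP.2.1.comap_of_injective N.subtype Subtype.coe_injective, ?_⟩
  intro K hK hKp
  obtain ⟨C, hC⟩ := exists_isOLower p hp N
  have h1 : K ≤ C := hC.2.2 K hK hKp
  have h2 : C.map N.subtype ≤ P :=
    hP.2.2 _ (olower_map_normal hNn hC) (hC.2.1.map N.subtype)
  have h3 : C ≤ P.subgroupOf N := Subgroup.map_le_iff_le_comap.mp h2
  exact h1.trans h3

/-- For a finite group `H` and primes `p`, `q`: the subgroup `O^q(H)` is
`p`-hypoelementary iff the quotient `H / O_p(H)` is `q`-hyperelementary. -/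
theorem oUpper_rHypoelementary_iff_quotient_qHyperelementary
    (p q : ℕ) (hp : p.Prime) (hq : q.Prime)
    (H : Type*) [Group H] [Finite H]
    (N : Subgroup H) (hN : IsOUpper q N)
    (P : Subgroup H) (hP : IsOLower p P) :
    IsRHypoelementary p N ↔
      (letI := hP.1; IsQHyperelementary q (H ⧸ P)) := by
  haveI hPn : P.Normal := hP.1
  obtain ⟨hNnorm, hNq, hNmin⟩ := hN
  haveI := hNnorm
  set π : H →* H ⧸ P := QuotientGroup.mk' P with hπ
  have hπsurj : Function.Surjective π := QuotientGroup.mk'_surjective P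
  -- O^q(H/P) = image of N
  have hOU : IsOUpper q (N.map π) := by
    refine ⟨hNnorm.map π hπsurj, ?_, ?_⟩
    · -- (H/P)/(N.map π) is a q-group
      have hsup : (P ⊔ N).Normal := Subgroup.sup_normal P N
      have hmapeq : N.map π = (P ⊔ N).map π := by
        rw [Subgroup.map_sup]
        have : P.map π = ⊥ := by
          rw [Subgroup.map_eq_bot_iff, hπ, QuotientGroup.ker_mk']
        rw [this, bot_sup_eq]
      have hq1 : IsPGroup q (H ⧸ (P ⊔ N)) := by
        have : Function.Surjective
            (QuotientGroup.map N (P ⊔ N) (MonoidHom.id H) le_sup_right) := by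
          intro x
          obtain ⟨y, rfl⟩ := QuotientGroup.mk'_surjective (P ⊔ N) x
          exact ⟨QuotientGroup.mk y, rfl⟩
        exact hNq.of_surjective _ this
      haveI := hsup
      have e := QuotientGroup.quotientQuotientEquivQuotient P (P ⊔ N) le_sup_left
      have e2 := QuotientGroup.quotientMulEquivOfEq hmapeq
      exact (hq1.of_equiv e.symm).of_equiv e2.symm
    · intro M' hM' hM'q
      haveI := hM'
      set K := M'.comap π with hK
      haveI hKn : K.Normal := hM'.comap π
      have hPK : P ≤ K := by
        intro x hx
        simp only [hK, Subgroup.mem_comap]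
        have : π x = 1 := (QuotientGroup.eq_one_iff x).mpr hx
        rw [this]; exact M'.one_mem
      have hmapK : K.map π = M' := Subgroup.map_comap_eq_self_of_surjective hπsurj M'
      have e := QuotientGroup.quotientQuotientEquivQuotient P K hPK
      have hqK : IsPGroup q (H ⧸ K) := by
        have e2 := QuotientGroup.quotientMulEquivOfEq hmapK.symm
        exact (hM'q.of_equiv e2).of_equiv e
      have hNK : N ≤ K := hNmin K hKn hqK
      calc N.map π ≤ K.map π := Subgroup.map_mono hNK
      _ = M' := hmapK
  -- O_p(N) = P ∩ N
  have hOL : IsOLower p (P.subgroupOf N) := isOLower_subgroupOf hp hNnorm hP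
  -- The isomorphism N / (P ∩ N) ≃* image of N in H/P
  haveI : (P.subgroupOf N).Normal := hOL.1
  have hker : (π.domRestrict N).ker = P.subgroupOf N := by
    rw [MonoidHom.ker_restrict, hπ, QuotientGroup.ker_mk']
  have hrange : (π.domRestrict N).range = N.map π := MonoidHom.domRestrict_range N π
  have e : (N ⧸ P.subgroupOf N) ≃* (N.map π) :=
    (QuotientGroup.quotientMulEquivOfEq hker.symm).trans
      ((QuotientGroup.quotientKerEquivRange (π.domRestrict N)).trans
        (MulEquiv.subgroupCongr hrange))
  constructor
  · rintro ⟨M₀, hM₀, hcyc⟩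
    have heq : M₀ = P.subgroupOf N := IsOLower.unique hM₀ hOL
    subst heq
    exact ⟨N.map π, hOU, isCyclic_of_surjective e e.surjective⟩
  · rintro ⟨N', hN', hcyc⟩
    have heq : N' = N.map π := IsOUpper.unique hN' hOU
    subst heq
    exact ⟨P.subgroupOf N, hOL, isCyclic_of_surjective e.symm e.symm.surjective⟩
end

section
/- Let k be a field of characteristic p, G a finite group, and H ≤ G. If a kH-module B is a direct summand of a permutation kH-module, then the tensor induced kG-module B↑_H^G ⊗ (tensor induction) is a direct summand of a permutation kG-module. -/
open LinearMap

section RepPrelude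

variable (k : Type*) [Field k]

/-- `f : V →ₗ[k] W` is equivariant for representations `ρ`, `τ` of `G`. -/
def IsEquivariant {G V W : Type*} [Group G] [AddCommGroup V] [Module k V]
    [AddCommGroup W] [Module k W]
    (ρ : Representation k G V) (τ : Representation k G W) (f : V →ₗ[k] W) : Prop :=
  ∀ g : G, f ∘ₗ ρ g = τ g ∘ₗ f

/-- `ρ` is a direct summand of `τ` (as `kG`-modules). -/
def IsDirectSummand {G V W : Type*} [Group G] [AddCommGroup V] [Module k V]
    [AddCommGroup W] [Module k W]
    (ρ : Representation k G V) (τ : Representation k G W) : Prop :=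
  ∃ (i : V →ₗ[k] W) (p : W →ₗ[k] V),
    IsEquivariant k ρ τ i ∧ IsEquivariant k τ ρ p ∧ p ∘ₗ i = LinearMap.id

/-- `ρ` is an indecomposable `kG`-module: it is nonzero and admits no nontrivial
equivariant idempotent. -/
def Indecomposable {G V : Type*} [Group G] [AddCommGroup V] [Module k V]
    (ρ : Representation k G V) : Prop :=
  Nontrivial V ∧ ∀ f : V →ₗ[k] V, IsEquivariant k ρ ρ f → f ∘ₗ f = f →
    f = 0 ∨ f = LinearMap.id

variable {H : Type*} [Group H] (G : Subgroup H)
variable {V : Type*} [AddCommGroup V] [Module k V]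

/-- The carrier of the module induced from the subgroup `G ≤ H`:
functions `f : H → V` with `f (x * g) = ρ g⁻¹ (f x)` (for finite groups this model of
(co)induction realizes `k[H] ⊗_{k[G]} V`). -/
def inducedSubmodule (ρ : Representation k G V) : Submodule k (H → V) where
  carrier := {f | ∀ (x : H) (g : G), f (x * g) = ρ g⁻¹ (f x)}
  add_mem' := by
    intro f₁ f₂ h₁ h₂ x g
    simp [h₁ x g, h₂ x g]
  zero_mem' := by intro x g; simp
  smul_mem' := by
    intro c f hf x g
    simp [hf x g]

/-- The representation of `H` induced from a representation `ρ` of `G ≤ H`. -/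
def induced (ρ : Representation k G V) : Representation k H (inducedSubmodule k G ρ) where
  toFun h := LinearMap.restrict (LinearMap.funLeft k V (fun x => h⁻¹ * x))
    (by
      intro f hf x g
      simpa [LinearMap.funLeft, mul_assoc] using hf (h⁻¹ * x) g)
  map_one' := by
    ext f x
    simp [LinearMap.restrict_apply, LinearMap.funLeft]
  map_mul' h₁ h₂ := by
    ext f x
    simp [LinearMap.restrict_apply, LinearMap.funLeft, mul_assoc]

/-- The restriction of a representation of `H` to a subgroup `G ≤ H`. -/
def resRep {W : Type*} [AddCommGroup W] [Module k W] (ρ : Representation k H W) :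
    Representation k G W :=
  ρ.comp G.subtype

/-- The permutation representation of `G` on a `G`-set `X`. -/
def permRep (G X : Type*) [Group G] [MulAction G X] : Representation k G (X → k) where
  toFun g := LinearMap.funLeft k k (fun x => g⁻¹ • x)
  map_one' := by
    ext v x
    simp [LinearMap.funLeft]
  map_mul' g₁ g₂ := by
    ext v x
    simp [LinearMap.funLeft, mul_smul]

/-- `ρ` is (isomorphic to) a permutation module. -/
def IsPermutationRep {G V : Type*} [Group G] [AddCommGroup V] [Module k V]
    (ρ : Representation k G V) : Prop :=
  ∃ (X : Type) (_ : Finite X) (m : MulAction G X),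
    ∃ e : V ≃ₗ[k] (X → k), IsEquivariant k ρ (permRep k G X) e.toLinearMap

/-- `ρ` has trivial source: it is a direct summand of a permutation module. -/
def HasTrivialSource {G V : Type*} [Group G] [AddCommGroup V] [Module k V]
    (ρ : Representation k G V) : Prop :=
  ∃ (X : Type) (_ : Finite X) (m : MulAction G X), IsDirectSummand k ρ (permRep k G X)

/-- `ρ` is relatively `D`-projective: it is a direct summand of the module induced
from its restriction to `D`. -/
def RelativelyProjective (D : Subgroup H) {W : Type*} [AddCommGroup W] [Module k W]
    (ρ : Representation k H W) : Prop :=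
  IsDirectSummand k ρ (induced k D (resRep k D ρ))

/-- `D` is a vertex of `ρ`: `ρ` is relatively `D`-projective and `D` is subconjugate to
any subgroup relative to which `ρ` is projective. -/
def IsVertex (D : Subgroup H) {W : Type*} [AddCommGroup W] [Module k W]
    (ρ : Representation k H W) : Prop :=
  RelativelyProjective k D ρ ∧
    ∀ D' : Subgroup H, RelativelyProjective k D' ρ → ∃ h : H, ∀ d ∈ D, h * d * h⁻¹ ∈ D'

end RepPrelude

section TIAux

open PiTensorProduct

variable {k : Type*} [Field k]
variable {G : Type*} [Group G] (H : Subgroup G)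
variable (s : G ⧸ H → G) (hmem : ∀ (g : G) (c : G ⧸ H), (s c)⁻¹ * g * s (g⁻¹ • c) ∈ H)

/-- The `H`-valued cocycle attached to the section `s`. -/
def tiCocycle (g : G) (c : G ⧸ H) : H := ⟨(s c)⁻¹ * g * s (g⁻¹ • c), hmem g c⟩

lemma tiCocycle_one (c : G ⧸ H) : tiCocycle H s hmem 1 c = 1 := by
  apply Subtype.ext
  simp [tiCocycle]

lemma tiCocycle_mul (g₁ g₂ : G) (c : G ⧸ H) :
    tiCocycle H s hmem (g₁ * g₂) c =
      tiCocycle H s hmem g₁ c * tiCocycle H s hmem g₂ (g₁⁻¹ • c) := by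
  apply Subtype.ext
  simp only [tiCocycle, Subgroup.coe_mul, mul_inv_rev, mul_smul]
  group

lemma tiCocycle_inv (g : G) (c : G ⧸ H) :
    (tiCocycle H s hmem g (g • c))⁻¹ = tiCocycle H s hmem g⁻¹ c := by
  apply Subtype.ext
  push_cast [tiCocycle]
  simp only [inv_smul_smul, inv_inv, mul_inv_rev]
  group

/-- The twisted (tensor-induction) action of `G` on `(G ⧸ H) → X`. -/
def tiAction {X : Type*} [MulAction H X] : MulAction G ((G ⧸ H) → X) where
  smul g f := fun c => tiCocycle H s hmem g c • f (g⁻¹ • c)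
  one_smul f := by
    funext c
    show tiCocycle H s hmem 1 c • f (1⁻¹ • c) = f c
    rw [tiCocycle_one]
    simp
  mul_smul g₁ g₂ f := by
    funext c
    show tiCocycle H s hmem (g₁ * g₂) c • f ((g₁ * g₂)⁻¹ • c) =
      tiCocycle H s hmem g₁ c •
        (tiCocycle H s hmem g₂ (g₁⁻¹ • c) • f (g₂⁻¹ • g₁⁻¹ • c))
    rw [tiCocycle_mul, mul_smul, mul_inv_rev, mul_smul]

lemma permRep_single {G X : Type*} [Group G] [MulAction G X] [DecidableEq X]
    (g : G) (x : X) :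
    permRep k G X g (Pi.single x (1 : k)) = Pi.single (g • x) (1 : k) := by
  funext y
  simp [permRep, LinearMap.funLeft, Pi.single_apply, inv_smul_eq_iff]

open scoped TensorProduct in
lemma ti_tprod_expand {ι : Type*} [Fintype ι] [DecidableEq ι]
    {X : Type*} [Fintype X] [DecidableEq X]
    {B : Type*} [AddCommGroup B] [Module k B]
    (p : (X → k) →ₗ[k] B) (v : ι → (X → k)) :
    (tprod k (fun c => p (v c)) : ⨂[k] (_ : ι), B) =
      ∑ f : ι → X, (∏ c, v c (f c)) •
        tprod k (fun c => p (Pi.single (f c) (1 : k))) := by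
  have hv : ∀ c, p (v c) = ∑ x : X, v c x • p (Pi.single x (1 : k)) := by
    intro c
    have h1 : ∀ x : X, v c x • (Pi.single x (1 : k) : X → k) = Pi.single x (v c x) := by
      intro x
      rw [← Pi.single_smul, smul_eq_mul, mul_one]
    calc p (v c) = p (∑ x : X, Pi.single x (v c x)) := by rw [Finset.univ_sum_single]
      _ = ∑ x : X, v c x • p (Pi.single x (1 : k)) := by
          rw [map_sum]
          exact Finset.sum_congr rfl fun x _ => by rw [← h1, map_smul]
  calc (tprod k (fun c => p (v c)) : ⨂[k] (_ : ι), B)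
      = tprod k (fun c => ∑ x : X, v c x • p (Pi.single x (1 : k))) := by
        congr 1; exact funext hv
    _ = ∑ f : ι → X, tprod k (fun c => v c (f c) • p (Pi.single (f c) (1 : k))) :=
        MultilinearMap.map_sum _ _
    _ = ∑ f : ι → X, (∏ c, v c (f c)) • tprod k (fun c => p (Pi.single (f c) (1 : k))) :=
        Finset.sum_congr rfl fun f _ => MultilinearMap.map_smul_univ _ _ _

end TIAux

open scoped TensorProduct in
/-- Let `k` be a field of characteristic `p`, `G` a finite group and `H ≤ G`.  Let `τ` be the
tensor induction to `G` of a representation `ρ` of `H` on `B`: the representation on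
`⨂_{c ∈ G/H} B` whose action is given, for a section `s` of `G → G/H`, by
`g · (⊗_c b_c) = ⊗_c (s c)⁻¹ g s (g⁻¹ c) · b_{g⁻¹ c}`.  If `B` is a direct summand of a
permutation `kH`-module, then the tensor induced module `B↑_H^G ⊗` is a direct summand of a
permutation `kG`-module. -/
theorem tensorInduced_hasTrivialSource
    {k : Type*} [Field k] {p : ℕ} (hp : p.Prime) [CharP k p]
    {G : Type*} [Group G] [Finite G] (H : Subgroup G)
    {B : Type*} [AddCommGroup B] [Module k B] [Module.Finite k B]
    (ρ : Representation k H B)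
    (s : G ⧸ H → G) (hs : ∀ c : G ⧸ H, (QuotientGroup.mk (s c) : G ⧸ H) = c)
    (hmem : ∀ (g : G) (c : G ⧸ H), (s c)⁻¹ * g * s (g⁻¹ • c) ∈ H)
    (τ : Representation k G (⨂[k] (_c : G ⧸ H), B))
    (hτ : ∀ (g : G) (b : (G ⧸ H) → B),
      τ g (PiTensorProduct.tprod k b) =
        PiTensorProduct.tprod k
          (fun c => ρ ⟨(s c)⁻¹ * g * s (g⁻¹ • c), hmem g c⟩ (b (g⁻¹ • c))))
    (hB : HasTrivialSource k ρ) :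
    HasTrivialSource k τ := by
  classical
  obtain ⟨X, hXfin, mX, i, pm, hi, hpE, hpi⟩ := hB
  letI := hXfin
  letI := mX
  letI : Fintype X := Fintype.ofFinite X
  letI : Fintype (G ⧸ H) := Fintype.ofFinite _
  letI mY : MulAction G ((G ⧸ H) → X) := tiAction H s hmem
  -- the cocycle in the form appearing in `hτ`
  have hcoc : ∀ (g : G) (c : G ⧸ H),
      (⟨(s c)⁻¹ * g * s (g⁻¹ • c), hmem g c⟩ : H) = tiCocycle H s hmem g c := fun _ _ => rfl
  have hsmul : ∀ (g : G) (f : (G ⧸ H) → X) (c : G ⧸ H),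
      (g • f) c = tiCocycle H s hmem g c • f (g⁻¹ • c) := fun _ _ _ => rfl
  -- the inclusion
  set Φ : MultilinearMap k (fun _ : G ⧸ H => B) (((G ⧸ H) → X) → k) :=
    (MultilinearMap.pi (fun f : (G ⧸ H) → X =>
      (MultilinearMap.mkPiAlgebra k (G ⧸ H) k).compLinearMap
        (fun c => LinearMap.proj (f c)))).compLinearMap (fun _ => i) with hΦ
  set I : (⨂[k] (_c : G ⧸ H), B) →ₗ[k] (((G ⧸ H) → X) → k) := PiTensorProduct.lift Φ with hI
  set P : (((G ⧸ H) → X) → k) →ₗ[k] (⨂[k] (_c : G ⧸ H), B) :=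
    (Pi.basisFun k ((G ⧸ H) → X)).constr k
      (fun f => PiTensorProduct.tprod k (fun c => pm (Pi.single (f c) (1 : k)))) with hP
  have hIapp : ∀ (b : (G ⧸ H) → B) (f : (G ⧸ H) → X),
      I (PiTensorProduct.tprod k b) f = ∏ c, i (b c) (f c) := by
    intro b f
    simp [hI, hΦ]
  have hPapp : ∀ w : ((G ⧸ H) → X) → k,
      P w = ∑ f : (G ⧸ H) → X,
        w f • PiTensorProduct.tprod k (fun c => pm (Pi.single (f c) (1 : k))) := by
    intro w
    rw [hP, Module.Basis.constr_apply_fintype]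
    simp [Pi.basisFun_equivFun]
  have hperm : ∀ (g : G) (w : ((G ⧸ H) → X) → k) (f : (G ⧸ H) → X),
      permRep k G ((G ⧸ H) → X) g w f = w (g⁻¹ • f) := fun _ _ _ => rfl
  have hpermH : ∀ (h : H) (w : X → k) (x : X), permRep k H X h w x = w (h⁻¹ • x) :=
    fun _ _ _ => rfl
  -- pointwise versions of the equivariance hypotheses
  have hiE : ∀ (h : H) (b : B), i (ρ h b) = permRep k H X h (i b) := by
    intro h b
    exact LinearMap.congr_fun (hi h) b
  have hpmE : ∀ (h : H) (w : X → k), pm (permRep k H X h w) = ρ h (pm w) := by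
    intro h w
    exact LinearMap.congr_fun (hpE h) w
  have hpiE : ∀ b : B, pm (i b) = b := fun b => LinearMap.congr_fun hpi b
  have hIeq : IsEquivariant k τ (permRep k G ((G ⧸ H) → X)) I := by
    intro g
    apply PiTensorProduct.ext
    apply MultilinearMap.ext
    intro b
    simp only [LinearMap.compMultilinearMap_apply, LinearMap.comp_apply]
    rw [hτ]
    funext f
    rw [hIapp]
    have hR : (permRep k G ((G ⧸ H) → X) g) (I (PiTensorProduct.tprod k b)) f
        = ∏ c, i (b c) (tiCocycle H s hmem g⁻¹ c • f (g • c)) := by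
      rw [hperm, hIapp]
      refine Finset.prod_congr rfl fun c _ => ?_
      rw [hsmul, inv_inv]
    rw [hR]
    refine Fintype.prod_equiv (MulAction.toPerm g⁻¹ : Equiv.Perm (G ⧸ H)) _ _ fun c => ?_
    show i (ρ (⟨(s c)⁻¹ * g * s (g⁻¹ • c), hmem g c⟩ : H) (b (g⁻¹ • c))) (f c)
      = i (b (g⁻¹ • c)) (tiCocycle H s hmem g⁻¹ (g⁻¹ • c) • f (g • g⁻¹ • c))
    rw [hcoc, hiE, hpermH]
    congr 1
    rw [smul_inv_smul]
    congr 1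
    rw [← tiCocycle_inv H s hmem g (g⁻¹ • c), smul_inv_smul]
  have hPeq : IsEquivariant k (permRep k G ((G ⧸ H) → X)) τ P := by
    intro g
    apply LinearMap.ext
    intro w
    simp only [LinearMap.comp_apply]
    rw [hPapp, hPapp, map_sum]
    simp only [map_smul]
    refine Fintype.sum_equiv (MulAction.toPerm g⁻¹ : Equiv.Perm ((G ⧸ H) → X)) _ _ fun f => ?_
    simp only [MulAction.toPerm_apply]
    have h4 : (PiTensorProduct.tprod k (fun c => pm (Pi.single (f c) (1 : k))) :
          ⨂[k] (_c : G ⧸ H), B)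
        = τ g (PiTensorProduct.tprod k (fun c => pm (Pi.single ((g⁻¹ • f) c) (1 : k)))) := by
      rw [hτ]
      congr 1
      funext c
      rw [hcoc, ← hpmE, permRep_single, ← hsmul, smul_inv_smul]
    rw [hperm, h4]
  have hPI : P ∘ₗ I = LinearMap.id := by
    apply PiTensorProduct.ext
    apply MultilinearMap.ext
    intro b
    simp only [LinearMap.compMultilinearMap_apply, LinearMap.comp_apply, LinearMap.id_apply]
    have h1 : P (I (PiTensorProduct.tprod k b))
        = ∑ f : (G ⧸ H) → X, (∏ c, i (b c) (f c)) •
            PiTensorProduct.tprod k (fun c => pm (Pi.single (f c) (1 : k))) := by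
      rw [hPapp]
      exact Finset.sum_congr rfl fun f _ => by rw [hIapp]
    rw [h1, ← ti_tprod_expand pm (fun c => i (b c))]
    congr 1
    funext c
    rw [hpiE]
  -- shrink the (possibly large) permutation basis to `Type 0`
  letI : Fintype ((G ⧸ H) → X) := inferInstance
  set n := Fintype.card ((G ⧸ H) → X) with hn
  set e : Fin n ≃ ((G ⧸ H) → X) := (Fintype.equivFin ((G ⧸ H) → X)).symm with he
  letI mY₀ : MulAction G (Fin n) :=
    { smul := fun g y => e.symm (g • e y)
      one_smul := fun y => by
        show e.symm ((1 : G) • e y) = y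
        rw [one_smul, Equiv.symm_apply_apply]
      mul_smul := fun g₁ g₂ y => by
        show e.symm ((g₁ * g₂) • e y) = e.symm (g₁ • e (e.symm (g₂ • e y)))
        rw [Equiv.apply_symm_apply, mul_smul] }
  have hsmul₀ : ∀ (g : G) (y : Fin n), g • y = e.symm (g • e y) := fun _ _ => rfl
  refine ⟨Fin n, inferInstance, mY₀,
    LinearMap.funLeft k k (⇑e) ∘ₗ I, P ∘ₗ LinearMap.funLeft k k (⇑e.symm), ?_, ?_, ?_⟩
  · intro g
    have h2 : LinearMap.funLeft k k (⇑e) ∘ₗ permRep k G ((G ⧸ H) → X) g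
        = permRep k G (Fin n) g ∘ₗ LinearMap.funLeft k k (⇑e) := by
      apply LinearMap.ext
      intro w
      funext y
      show (permRep k G ((G ⧸ H) → X) g w) (e y) = w (e (g⁻¹ • y))
      rw [hperm, hsmul₀, Equiv.apply_symm_apply]
    calc (LinearMap.funLeft k k (⇑e) ∘ₗ I) ∘ₗ τ g
        = LinearMap.funLeft k k (⇑e) ∘ₗ (I ∘ₗ τ g) := by rw [LinearMap.comp_assoc]
      _ = LinearMap.funLeft k k (⇑e) ∘ₗ (permRep k G ((G ⧸ H) → X) g ∘ₗ I) := by rw [hIeq g]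
      _ = (LinearMap.funLeft k k (⇑e) ∘ₗ permRep k G ((G ⧸ H) → X) g) ∘ₗ I := by
            rw [LinearMap.comp_assoc]
      _ = permRep k G (Fin n) g ∘ₗ (LinearMap.funLeft k k (⇑e) ∘ₗ I) := by
            rw [h2, LinearMap.comp_assoc]
  · intro g
    have h2 : LinearMap.funLeft k k (⇑e.symm) ∘ₗ permRep k G (Fin n) g
        = permRep k G ((G ⧸ H) → X) g ∘ₗ LinearMap.funLeft k k (⇑e.symm) := by
      apply LinearMap.ext
      intro w
      funext f
      show (permRep k G (Fin n) g w) (e.symm f) = w (e.symm (g⁻¹ • f))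
      have : permRep k G (Fin n) g w (e.symm f) = w (g⁻¹ • e.symm f) := rfl
      rw [this, hsmul₀, Equiv.apply_symm_apply]
    calc (P ∘ₗ LinearMap.funLeft k k (⇑e.symm)) ∘ₗ permRep k G (Fin n) g
        = P ∘ₗ (LinearMap.funLeft k k (⇑e.symm) ∘ₗ permRep k G (Fin n) g) := by
          rw [LinearMap.comp_assoc]
      _ = P ∘ₗ (permRep k G ((G ⧸ H) → X) g ∘ₗ LinearMap.funLeft k k (⇑e.symm)) := by rw [h2]
      _ = (P ∘ₗ permRep k G ((G ⧸ H) → X) g) ∘ₗ LinearMap.funLeft k k (⇑e.symm) := by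
          rw [LinearMap.comp_assoc]
      _ = τ g ∘ₗ (P ∘ₗ LinearMap.funLeft k k (⇑e.symm)) := by
          rw [hPeq g, LinearMap.comp_assoc]
  · have h3 : LinearMap.funLeft k k (⇑e.symm) ∘ₗ LinearMap.funLeft k k (⇑e)
        = LinearMap.id := by
      rw [← LinearMap.funLeft_comp]
      have h5 : (⇑e ∘ ⇑e.symm) = _root_.id := funext fun y => e.apply_symm_apply y
      rw [h5]
      apply LinearMap.ext
      intro w
      exact LinearMap.funLeft_id (R := k) (M := k) w
    calc (P ∘ₗ LinearMap.funLeft k k (⇑e.symm)) ∘ₗ (LinearMap.funLeft k k (⇑e) ∘ₗ I)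
        = P ∘ₗ (LinearMap.funLeft k k (⇑e.symm) ∘ₗ LinearMap.funLeft k k (⇑e)) ∘ₗ I := by
          rw [LinearMap.comp_assoc, LinearMap.comp_assoc]
      _ = P ∘ₗ I := by rw [h3, LinearMap.id_comp]
      _ = LinearMap.id := hPI
end
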